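/- Let F and G be two finite filtrations of subsets of the ground set of a finite matroid M (each a nested chain of subsets ending at E). There exists a basis of M that simultaneously minimizes the F-weight and the G-weight (equivalently, freely generates both filtrations) if and only if the family F ∪ G is modular, i.e., every pair (F_p, G_q) satisfies rk(F_p ∪ G_q) + rk(F_p ∩ G_q) = rk(F_p) + rk(G_q). -/

import Mathlib

open Set

/-- The rank of a set in a matroid: the maximal cardinality of an independent subset. -/
noncomputable def matroidRk {α : Type*} (M : Matroid α) (S : Set α) : ℕ :=
  sSup {n : ℕ | ∃ I ⊆ S, M.Indep I ∧ I.ncard = n}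

namespace MRK
variable {α : Type*} {M : Matroid α} [M.Finite] {I X Y : Set α}

lemma bdd (X : Set α) : BddAbove {n : ℕ | ∃ I ⊆ X, M.Indep I ∧ I.ncard = n} := by
  refine ⟨M.E.ncard, fun n hn => ?_⟩
  obtain ⟨I, _, hI, rfl⟩ := hn
  exact Set.ncard_le_ncard hI.subset_ground M.ground_finite

lemma le_rk (hI : M.Indep I) (hIX : I ⊆ X) : I.ncard ≤ matroidRk M X :=
  le_csSup (bdd X) ⟨I, hIX, hI, rfl⟩

lemma rk_eq (hI : M.IsBasis I X) : matroidRk M X = I.ncard := by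
  refine le_antisymm (csSup_le ⟨0, ∅, empty_subset _, M.empty_indep, by simp⟩ ?_)
    (le_rk hI.indep hI.subset)
  rintro n ⟨J, hJX, hJ, rfl⟩
  obtain ⟨I', hI', hJI'⟩ := hJ.subset_isBasis_of_subset hJX hI.subset_ground
  have hcard := hI'.encard_eq_encard hI
  have hJf : J.Finite := M.set_finite J hJ.subset_ground
  have hIf : I.Finite := M.set_finite I hI.indep.subset_ground
  have : J.encard ≤ I.encard := le_trans (Set.encard_le_encard hJI') hcard.le
  rw [Set.ncard_def, Set.ncard_def]
  exact ENat.toNat_le_toNat this hIf.encard_lt_top.ne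

end MRK

namespace MRK
variable {α : Type*} {M : Matroid α} [M.Finite] {I X Y C D : Set α}

lemma fin (X : Set α) (hX : X ⊆ M.E) : X.Finite := M.set_finite X hX

lemma submod (hX : X ⊆ M.E) (hY : Y ⊆ M.E) :
    matroidRk M (X ∪ Y) + matroidRk M (X ∩ Y) ≤ matroidRk M X + matroidRk M Y := by
  obtain ⟨I, hI⟩ := M.exists_isBasis (X ∩ Y) ((inter_subset_left).trans hX)
  obtain ⟨J, hJ, hIJ⟩ := hI.indep.subset_isBasis_of_subset
    (hI.subset.trans (inter_subset_left.trans subset_union_left)) (union_subset hX hY)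
  rw [rk_eq hJ, rk_eq hI]
  have hJXY : J ⊆ X ∪ Y := hJ.subset
  have hdXY : J \ X ⊆ Y := fun x hx => (hJXY hx.1).resolve_left hx.2
  have h1 : (J ∩ X).ncard ≤ matroidRk M X :=
    le_rk (hJ.indep.subset inter_subset_left) inter_subset_right
  have h2 : ((J \ X) ∪ I).ncard ≤ matroidRk M Y :=
    le_rk (hJ.indep.subset (union_subset diff_subset hIJ))
      (union_subset hdXY (hI.subset.trans inter_subset_right))
  have hJfin : J.Finite := fin J hJ.indep.subset_ground
  have hIfin : I.Finite := fin I hI.indep.subset_ground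
  have hdisj : Disjoint (J \ X) I := by
    refine Set.disjoint_left.mpr fun x hx hxI => hx.2 ((hI.subset hxI).1)
  have hcard : ((J \ X) ∪ I).ncard = (J \ X).ncard + I.ncard :=
    Set.ncard_union_eq hdisj (hJfin.subset diff_subset) hIfin
  have hsplit : (J ∩ X).ncard + (J \ X).ncard = J.ncard :=
    Set.ncard_inter_add_ncard_diff_eq_ncard J X hJfin
  omega

omit [M.Finite] in
lemma span (hC : M.IsBasis C Y) (hD : M.IsBasis D X) :
    ∃ I, I ⊆ C ∪ D ∧ M.IsBasis I (X ∪ Y) := by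
  obtain ⟨I, hI⟩ := M.exists_isBasis (C ∪ D)
    (union_subset hC.indep.subset_ground hD.indep.subset_ground)
  refine ⟨I, hI.subset, hI.indep.isBasis_of_subset_of_subset_closure
    (hI.subset.trans (union_subset (hC.subset.trans subset_union_right)
      (hD.subset.trans subset_union_left))) ?_⟩
  rw [hI.closure_eq_closure]
  refine union_subset ?_ ?_
  · exact hD.subset_closure.trans (M.closure_subset_closure subset_union_right)
  · exact hC.subset_closure.trans (M.closure_subset_closure subset_union_left)

end MRK

namespace MRK
variable {α : Type*} {M : Matroid α} [M.Finite] {Z Y X₁ X₂ C D : Set α}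

lemma step (hZY : Z ⊆ Y) (hYE : Y ⊆ M.E) (hX12 : X₁ ⊆ X₂) (hX2E : X₂ ⊆ M.E)
    (hC : M.IsBasis C Z) (hD : M.IsBasis D (X₁ ∩ Y))
    (hCX2 : M.IsBasis (C ∩ X₂) (X₂ ∩ Z)) (hCD : M.Indep (C ∪ D))
    (hmod : matroidRk M (X₂ ∪ Z) + matroidRk M (X₂ ∩ Z) =
      matroidRk M X₂ + matroidRk M Z) :
    ∃ D', M.IsBasis D' (X₂ ∩ Y) ∧ D ⊆ D' ∧ C ∩ X₂ ⊆ D' ∧ M.Indep (C ∪ D') ∧ D' ∩ X₁ = D := by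
  have hZE : Z ⊆ M.E := hZY.trans hYE
  have hseed : M.Indep (D ∪ (C ∩ X₂)) :=
    hCD.subset (union_subset subset_union_right (inter_subset_left.trans subset_union_left))
  have hseedsub : D ∪ (C ∩ X₂) ⊆ X₂ ∩ Y :=
    union_subset (hD.subset.trans (inter_subset_inter_left _ hX12))
      (hCX2.subset.trans (inter_subset_inter_right _ hZY))
  obtain ⟨D', hD', hsub⟩ := hseed.subset_isBasis_of_subset hseedsub (inter_subset_left.trans hX2E)
  have hDD' : D ⊆ D' := (subset_union_left).trans hsub
  have hCX2D' : C ∩ X₂ ⊆ D' := (subset_union_right).trans hsub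
  have h1 : C ∩ D' = C ∩ X₂ :=
    subset_antisymm (inter_subset_inter_right C (hD'.subset.trans inter_subset_left))
      (subset_inter inter_subset_left hCX2D')
  -- independence of C ∪ D'
  obtain ⟨I, hIsub, hIB⟩ := span hC hD'
  have e1 : ((X₂ ∩ Y) ∪ Z) ∪ X₂ = X₂ ∪ Z := by
    apply subset_antisymm
    · exact union_subset (union_subset (inter_subset_left.trans subset_union_left)
        subset_union_right) subset_union_left
    · exact union_subset subset_union_right
        ((subset_union_right).trans subset_union_left)
  have e2 : ((X₂ ∩ Y) ∪ Z) ∩ X₂ = X₂ ∩ Y := by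
    apply subset_antisymm
    · rintro x ⟨h | h, hx2⟩
      · exact ⟨hx2, h.2⟩
      · exact ⟨hx2, hZY h⟩
    · rintro x ⟨hx2, hxy⟩
      exact ⟨Or.inl ⟨hx2, hxy⟩, hx2⟩
  have hsm := submod (M := M) (X := (X₂ ∩ Y) ∪ Z) (Y := X₂) (union_subset (inter_subset_left.trans hX2E) hZE) hX2E
  rw [e1, e2] at hsm
  have hCcard : matroidRk M Z = C.ncard := rk_eq hC
  have hD'card : matroidRk M (X₂ ∩ Y) = D'.ncard := rk_eq hD'
  have hCX2card : matroidRk M (X₂ ∩ Z) = (C ∩ X₂).ncard := rk_eq hCX2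
  have hIcard : matroidRk M ((X₂ ∩ Y) ∪ Z) = I.ncard := rk_eq hIB
  have hCfin : C.Finite := fin C hC.indep.subset_ground
  have hD'fin : D'.Finite := fin D' hD'.indep.subset_ground
  have hie : (C ∪ D').ncard + (C ∩ D').ncard = C.ncard + D'.ncard :=
    Set.ncard_union_add_ncard_inter C D' hCfin hD'fin
  rw [h1] at hie
  have hle : (C ∪ D').ncard ≤ I.ncard := by omega
  have hIeq : I = C ∪ D' :=
    Set.eq_of_subset_of_ncard_le hIsub hle (hCfin.union hD'fin)
  have hind : M.Indep (C ∪ D') := hIeq ▸ hIB.indep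
  refine ⟨D', hD', hDD', hCX2D', hind, subset_antisymm ?_ (subset_inter hDD'
    (hD.subset.trans inter_subset_left))⟩
  rintro x ⟨hxD', hxX₁⟩
  have heq := hD.eq_of_subset_indep (hD'.indep.subset (insert_subset hxD' hDD'))
    (subset_insert x D) (insert_subset ⟨hxX₁, (hD'.subset hxD').2⟩ hD.subset)
  rw [heq]
  exact mem_insert x D

end MRK

namespace MRK
variable {α : Type*} {M : Matroid α} [M.Finite]

lemma inner (f : ℕ → Set α) (hf : Monotone f) (hfE : ∀ i, f i ⊆ M.E)
    {Z Y C : Set α} (hZY : Z ⊆ Y) (hYE : Y ⊆ M.E) (hC : M.IsBasis C Z)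
    (hCf : ∀ i, M.IsBasis (C ∩ f i) (f i ∩ Z))
    (hmod : ∀ i, matroidRk M (f i ∪ Z) + matroidRk M (f i ∩ Z)
      = matroidRk M (f i) + matroidRk M Z) :
    ∀ i, ∃ D, M.IsBasis D (f i ∩ Y) ∧ C ∩ f i ⊆ D ∧ M.Indep (C ∪ D) ∧
      ∀ i' ≤ i, M.IsBasis (D ∩ f i') (f i' ∩ Y) := by
  intro i
  induction i with
  | zero =>
    obtain ⟨D', hD', _, hCX2D', hind, -⟩ := step (M := M) (X₁ := ∅) (D := ∅) hZY hYE
      (empty_subset _) (hfE 0) hC (by rw [empty_inter]; exact M.empty_indep.isBasis_self)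
      (hCf 0) (by rw [union_empty]; exact hC.indep) (hmod 0)
    refine ⟨D', hD', hCX2D', hind, fun i' hi' => ?_⟩
    obtain rfl : i' = 0 := Nat.le_zero.mp hi'
    rw [inter_eq_self_of_subset_left (hD'.subset.trans inter_subset_left)]
    exact hD'
  | succ i ih =>
    obtain ⟨D, hD, _, hCD, hinv⟩ := ih
    obtain ⟨D', hD', _, hCX2D', hind, hback⟩ := step hZY hYE (hf (Nat.le_succ i))
      (hfE (i + 1)) hC hD (hCf (i + 1)) hCD (hmod (i + 1))
    refine ⟨D', hD', hCX2D', hind, fun i' hi' => ?_⟩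
    rcases Nat.lt_succ_iff_lt_or_eq.mp (Nat.lt_succ_of_le hi') with h | rfl
    · have h' : i' ≤ i := Nat.lt_succ_iff.mp h
      have h1 : D' ∩ f i' = D ∩ f i' := by
        rw [← hback, inter_assoc, Set.inter_eq_right.mpr (hf h')]
      rw [h1]
      exact hinv i' h'
    · rw [inter_eq_self_of_subset_left (hD'.subset.trans inter_subset_left)]
      exact hD'

lemma outer (f g : ℕ → Set α) (hf : Monotone f) (hg : Monotone g) (hfE : ∀ i, f i ⊆ M.E)
    (hgE : ∀ j, g j ⊆ M.E) (m : ℕ) (hfm : f m = M.E)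
    (hclamp : ∀ i, f i = f (min i m))
    (hmod : ∀ i j, matroidRk M (f i ∪ g j) + matroidRk M (f i ∩ g j)
      = matroidRk M (f i) + matroidRk M (g j)) :
    ∀ j, ∃ C, M.IsBasis C (g j) ∧ (∀ i, M.IsBasis (C ∩ f i) (f i ∩ g j)) ∧
      ∀ j' ≤ j, M.IsBasis (C ∩ g j') (g j') := by
  have key : ∀ (Z : Set α) (C : Set α) (Y : Set α), Z ⊆ Y → Y ⊆ M.E → M.IsBasis C Z →
      (∀ i, M.IsBasis (C ∩ f i) (f i ∩ Z)) →
      (∀ i, matroidRk M (f i ∪ Z) + matroidRk M (f i ∩ Z)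
        = matroidRk M (f i) + matroidRk M Z) →
      ∃ D, M.IsBasis D Y ∧ C ⊆ D ∧ M.Indep (C ∪ D) ∧
        ∀ i, M.IsBasis (D ∩ f i) (f i ∩ Y) := by
    intro Z C Y hZY hYE hC hCf hmod'
    obtain ⟨D, hD, hCfm, hind, hinv⟩ := inner f hf hfE hZY hYE hC hCf hmod' m
    have hfmY : f m ∩ Y = Y := by rw [hfm, inter_eq_self_of_subset_right hYE]
    have hCD : C ⊆ D := by
      have : C ∩ f m = C := by
        rw [hfm, inter_eq_self_of_subset_left hC.indep.subset_ground]
      rwa [this] at hCfm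
    refine ⟨D, hfmY ▸ hD, hCD, hind, fun i => ?_⟩
    rw [hclamp i]
    exact hinv (min i m) (min_le_right i m)
  intro j
  induction j with
  | zero =>
    obtain ⟨D, hD, _, _, hinv⟩ := key ∅ ∅ (g 0) (empty_subset _) (hgE 0)
      (M.empty_indep.isBasis_self)
      (fun i => by rw [empty_inter, inter_empty]; exact M.empty_indep.isBasis_self)
      (fun i => by rw [union_empty, inter_empty])
    refine ⟨D, hD, hinv, fun j' hj' => ?_⟩
    obtain rfl : j' = 0 := Nat.le_zero.mp hj'
    rw [inter_eq_self_of_subset_left hD.subset]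
    exact hD
  | succ j ih =>
    obtain ⟨C, hCb, hCf, hCg⟩ := ih
    obtain ⟨D, hD, hCD, hind, hinv⟩ := key (g j) C (g (j + 1))
      (hg (Nat.le_succ j)) (hgE (j + 1)) hCb hCf (fun i => hmod i j)
    refine ⟨D, hD, hinv, fun j' hj' => ?_⟩
    rcases Nat.lt_succ_iff_lt_or_eq.mp (Nat.lt_succ_of_le hj') with h | rfl
    · have h' : j' ≤ j := Nat.lt_succ_iff.mp h
      have hbasis := hCg j' h'
      have heq := hbasis.eq_of_subset_indep (hD.indep.subset inter_subset_left)
        (inter_subset_inter_left _ hCD) inter_subset_right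
      rw [← heq]
      exact hbasis
    · rw [inter_eq_self_of_subset_left hD.subset]
      exact hD

end MRK

theorem stmt7 {α : Type*} (M : Matroid α) [M.Finite] {m n : ℕ}
    (F : Fin (m + 1) → Set α) (G : Fin (n + 1) → Set α)
    (hFmono : Monotone F) (hGmono : Monotone G)
    (hFtop : F (Fin.last m) = M.E) (hGtop : G (Fin.last n) = M.E) :
    (∃ B : Set α, M.IsBase B ∧ (∀ i, M.IsBasis (B ∩ F i) (F i)) ∧
        (∀ j, M.IsBasis (B ∩ G j) (G j))) ↔
    ∀ i j, matroidRk M (F i ∪ G j) + matroidRk M (F i ∩ G j) =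
      matroidRk M (F i) + matroidRk M (G j) := by
  have hFE : ∀ i, F i ⊆ M.E := fun i => hFtop ▸ hFmono (Fin.le_last i)
  have hGE : ∀ j, G j ⊆ M.E := fun j => hGtop ▸ hGmono (Fin.le_last j)
  constructor
  · rintro ⟨B, hB, hF, hG⟩ i j
    refine le_antisymm (MRK.submod (hFE i) (hGE j)) ?_
    have h1 : (B ∩ (F i ∪ G j)).ncard ≤ matroidRk M (F i ∪ G j) :=
      MRK.le_rk (hB.indep.subset inter_subset_left) inter_subset_right
    have h2 : (B ∩ (F i ∩ G j)).ncard ≤ matroidRk M (F i ∩ G j) :=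
      MRK.le_rk (hB.indep.subset inter_subset_left) inter_subset_right
    have e1 : B ∩ (F i ∪ G j) = (B ∩ F i) ∪ (B ∩ G j) := inter_union_distrib_left ..
    have e2 : B ∩ (F i ∩ G j) = (B ∩ F i) ∩ (B ∩ G j) := inter_inter_distrib_left ..
    have hfin1 : (B ∩ F i).Finite := M.set_finite _ (hF i).indep.subset_ground
    have hfin2 : (B ∩ G j).Finite := M.set_finite _ (hG j).indep.subset_ground
    have hie := Set.ncard_union_add_ncard_inter (B ∩ F i) (B ∩ G j) hfin1 hfin2
    have ra : matroidRk M (F i) = (B ∩ F i).ncard := MRK.rk_eq (hF i)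
    have rb : matroidRk M (G j) = (B ∩ G j).ncard := MRK.rk_eq (hG j)
    rw [e1] at h1; rw [e2] at h2; omega
  · intro hmod
    have hilt : ∀ i : ℕ, min i m < m + 1 := fun i => Nat.lt_succ_of_le (min_le_right i m)
    have hjlt : ∀ j : ℕ, min j n < n + 1 := fun j => Nat.lt_succ_of_le (min_le_right j n)
    set f : ℕ → Set α := fun i => F ⟨min i m, hilt i⟩ with hfdef
    set g : ℕ → Set α := fun j => G ⟨min j n, hjlt j⟩ with hgdef
    have hfmono : Monotone f := fun a b hab =>
      hFmono (Fin.mk_le_mk.mpr (min_le_min_right _ hab))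
    have hgmono : Monotone g := fun a b hab =>
      hGmono (Fin.mk_le_mk.mpr (min_le_min_right _ hab))
    have hfE : ∀ i, f i ⊆ M.E := fun i => hFE _
    have hgE : ∀ j, g j ⊆ M.E := fun j => hGE _
    have hfm : f m = M.E :=
      (congrArg F (Fin.ext (show min m m = (Fin.last m).val by simp))).trans hFtop
    have hgn : g n = M.E :=
      (congrArg G (Fin.ext (show min n n = (Fin.last n).val by simp))).trans hGtop
    have hclamp : ∀ i, f i = f (min i m) := fun i =>
      congrArg F (Fin.ext (show min i m = min (min i m) m by omega))
    have hmodN : ∀ i j, matroidRk M (f i ∪ g j) + matroidRk M (f i ∩ g j)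
        = matroidRk M (f i) + matroidRk M (g j) := fun i j =>
      hmod ⟨min i m, hilt i⟩ ⟨min j n, hjlt j⟩
    obtain ⟨C, hCb, hCf, hCg⟩ := MRK.outer f g hfmono hgmono hfE hgE m hfm hclamp hmodN n
    have hfi : ∀ i : Fin (m + 1), f ↑i = F i := fun i =>
      congrArg F (Fin.ext (show min ↑i m = ↑i by have := i.isLt; omega))
    have hgj : ∀ j : Fin (n + 1), g ↑j = G j := fun j =>
      congrArg G (Fin.ext (show min ↑j n = ↑j by have := j.isLt; omega))
    refine ⟨C, ?_, fun i => ?_, fun j => ?_⟩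
    · exact Matroid.isBasis_ground_iff.mp (hgn ▸ hCb)
    · have := hCf ↑i
      rw [hfi i, hgn, inter_eq_self_of_subset_left (hFE i)] at this
      exact this
    · have := hCg ↑j (Nat.lt_succ_iff.mp j.isLt)
      rw [hgj j] at this
      exact this
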